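/- Let n ≥ 1, l ∈ [0,2n], 𝐚 = (a_1,…,a_l) a strictly increasing sequence of integers in [1,2n], and i ∈ [1,l] such that a_j ∉ Rem(𝐚) for all j ∈ [i,l]. Then Rem(𝐚) = Rem(a_1,…,a_{i−1}), and consequently red(𝐚) is the concatenation of red(a_1,…,a_{i−1}) with (a_i,…,a_l). -/

import Mathlib

/-- `remAux` computes the set of removable entries of a strictly increasing
sequence, given as a list in *reversed* order (so the head is the last entry). -/
def remAux : List ℕ → Finset ℕ
  | [] => ∅
  | [_] => ∅
  | b :: a :: rest =>
    if Even b ∧ a + 1 = b ∧ b + (remAux rest).card + 1 < 2 * (rest.length + 2) then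
      insert a (insert b (remAux rest))
    else remAux (a :: rest)

/-- `remSet 𝐚` : the set `Rem(𝐚)` of removable entries of the strictly
increasing sequence `𝐚 = (a_1, …, a_l)` (given in its natural order). -/
def remSet (l : List ℕ) : Finset ℕ := remAux l.reverse

/-- `redSeq 𝐚` : the reduction `red(𝐚)`, i.e. `𝐚` with the removable entries
removed. -/
def redSeq (l : List ℕ) : List ℕ := l.filter (fun x => decide (x ∉ remSet l))

lemma remAux_cons_of_not_mem (b : ℕ) (t : List ℕ) (h : b ∉ remAux (b :: t)) :
    remAux (b :: t) = remAux t := by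
  cases t with
  | nil => rfl
  | cons a rest =>
    by_cases hc : Even b ∧ a + 1 = b ∧ b + (remAux rest).card + 1 < 2 * (rest.length + 2)
    · exfalso; apply h
      rw [remAux, if_pos hc]
      simp
    · rw [remAux, if_neg hc]

lemma remAux_append (s t : List ℕ) (h : ∀ x ∈ s, x ∉ remAux (s ++ t)) :
    remAux (s ++ t) = remAux t := by
  induction s with
  | nil => rfl
  | cons b s' ih =>
    have hb : b ∉ remAux (b :: (s' ++ t)) := h b List.mem_cons_self
    have e := remAux_cons_of_not_mem b (s' ++ t) hb
    rw [List.cons_append, e]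
    exact ih fun x hx => by
      have := h x (List.mem_cons_of_mem _ hx)
      rwa [List.cons_append, e] at this

theorem stmt12 (n : ℕ) (hn : 1 ≤ n) (a : List ℕ)
    (hinc : a.Chain' (· < ·)) (hbd : ∀ x ∈ a, 1 ≤ x ∧ x ≤ 2 * n)
    (hlen : a.length ≤ 2 * n) (i : ℕ) (hi1 : 1 ≤ i) (hil : i ≤ a.length)
    (hni : ∀ j, i ≤ j → j ≤ a.length → a.getD (j - 1) 0 ∉ remSet a) :
    remSet a = remSet (a.take (i - 1)) ∧
    redSeq a = redSeq (a.take (i - 1)) ++ a.drop (i - 1) := by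
  have hdrop : ∀ x ∈ a.drop (i - 1), x ∉ remSet a := by
    intro x hx
    obtain ⟨k, hk, he⟩ := List.getElem_of_mem hx
    have hk' : i - 1 + k < a.length := by
      have := hk; rw [List.length_drop] at this; omega
    rw [List.getElem_drop] at he
    have := hni (i + k) (by omega) (by omega)
    rw [show i + k - 1 = i - 1 + k by omega, List.getD_eq_getElem a 0 hk', he] at this
    exact this
  have hsplit : a = a.take (i - 1) ++ a.drop (i - 1) := (List.take_append_drop _ _).symm
  have key : remSet a = remSet (a.take (i - 1)) := by
    unfold remSet
    conv_lhs => rw [hsplit]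
    rw [List.reverse_append]
    apply remAux_append
    intro x hx
    rw [List.mem_reverse] at hx
    have := hdrop x hx
    unfold remSet at this
    rw [hsplit, List.reverse_append] at this
    exact this
  refine ⟨key, ?_⟩
  have key' : remSet (a.take (i - 1) ++ a.drop (i - 1)) = remSet (a.take (i - 1)) := by
    rw [← hsplit]; exact key
  unfold redSeq
  conv_lhs => rw [hsplit]
  rw [key', List.filter_append]
  congr 1
  rw [List.filter_eq_self]
  intro x hx
  simp only [decide_eq_true_eq]
  rw [← key]; exact hdrop x hx
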